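/- The element r_6 ∈ F_6 does not belong to the subgroup W̄_4 · γ_5 F_6; indeed, in the truncated algebra A_4 over ℤ/2ℤ on X_1, …, X_6, the degree-3 component of E^2(r_6) has coefficient 1 on the monomial X_2X_4X_6. -/

import Mathlib

/-- `W_n`, the set of `n`-th powers in a group `G`. -/
def powSet (G : Type*) [Group G] (n : ℕ) : Set G := {x | ∃ w : G, x = w ^ n}

/-- `W̄_n`, the normal subgroup of the free group `F_m` generated by the set `W_n`
of `n`-th powers. -/
def Wbar (m n : ℕ) : Subgroup (FreeGroup (Fin m)) :=
  Subgroup.normalClosure (powSet (FreeGroup (Fin m)) n)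

instance (m n : ℕ) : (Wbar m n).Normal := Subgroup.normalClosure_normal

/-- `W̄_n · γ_q F_m`: since both factors are normal subgroups of `F_m`, this product
subgroup equals the join.  (Recall `lowerCentralSeries G 0 = G = γ₁ G`, so
`γ_q G = lowerCentralSeries G (q-1)`.) -/
def WbarGamma (m n q : ℕ) : Subgroup (FreeGroup (Fin m)) :=
  Wbar m n ⊔ (⊤ : Subgroup (FreeGroup (Fin m))).lowerCentralSeries (q - 1)

instance (m n q : ℕ) : (WbarGamma m n q).Normal := Subgroup.sup_normal _ _

/-- `F^q(m,n) = F_m / (W̄_n · γ_q F_m)`. -/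
def BurnsideQuot (m n q : ℕ) : Type := FreeGroup (Fin m) ⧸ WbarGamma m n q

noncomputable instance (m n q : ℕ) : Group (BurnsideQuot m n q) :=
  QuotientGroup.Quotient.group _

/-- The monomial `X_{w₁} ⋯ X_{w_l}` in the free associative `ZMod p`-algebra `T` on
noncommuting indeterminates `X_1, …, X_m`. -/
def magnusMonomial (p m : ℕ) (w : List (Fin m)) : FreeAlgebra (ZMod p) (Fin m) :=
  (w.map (FreeAlgebra.ι (ZMod p))).prod

/-- The relation generating (as a ring congruence) the two-sided ideal `I^k`, where
`I ⊆ T` is the two-sided ideal generated by `X_1, …, X_m`: every monomial of degree `k`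
is set to `0`. -/
def truncRel (p m k : ℕ) :
    FreeAlgebra (ZMod p) (Fin m) → FreeAlgebra (ZMod p) (Fin m) → Prop :=
  fun a b => ∃ w : List (Fin m), w.length = k ∧ a = magnusMonomial p m w ∧ b = 0

/-- The truncated algebra `A_k = T/I^k`. -/
abbrev TruncAlgebra (p m k : ℕ) := RingQuot (truncRel p m k)

/-- The quotient map `T → A_k`. -/
def truncMk (p m k : ℕ) :
    FreeAlgebra (ZMod p) (Fin m) →+* TruncAlgebra p m k :=
  RingQuot.mkRingHom _

lemma isUnit_one_add_X (p m k : ℕ) (i : Fin m) :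
    IsUnit (1 + truncMk p m k (FreeAlgebra.ι (ZMod p) i)) := by
  refine IsNilpotent.isUnit_one_add ⟨k, ?_⟩
  rw [← map_pow]
  have h1 : (FreeAlgebra.ι (ZMod p) i) ^ k = magnusMonomial p m (List.replicate k i) := by
    simp [magnusMonomial, List.map_replicate, List.prod_replicate]
  have h2 : truncMk p m k (magnusMonomial p m (List.replicate k i)) = truncMk p m k 0 :=
    RingQuot.mkRingHom_rel ⟨List.replicate k i, List.length_replicate, rfl, rfl⟩
  rw [h1, h2, map_zero]

/-- The Magnus `ZMod p`-expansion truncated at degree `k`: the unique group homomorphism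
`E^p : F_m → A_kˣ` with `E^p(x_i) = 1 + X_i`. -/
noncomputable def magnus (p m k : ℕ) :
    FreeGroup (Fin m) →* (TruncAlgebra p m k)ˣ :=
  FreeGroup.lift fun i => (isUnit_one_add_X p m k i).unit

/-- The coefficient of the monomial `X_{w₁} ⋯ X_{w_l}` in an element of the free
algebra `T`, via the canonical basis of `T` given by words in `X_1, …, X_m`. -/
noncomputable def magnusCoeff (p m : ℕ) (w : List (Fin m))
    (t : FreeAlgebra (ZMod p) (Fin m)) : ZMod p :=
  (FreeAlgebra.equivMonoidAlgebraFreeMonoid (R := ZMod p) (X := Fin m) t).coeff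
    (FreeMonoid.ofList w)

/-- The generators `x_1, …, x_6` of the free group `F_6` (`xF6 i` is `x_{i+1}`). -/
def xF6 (i : Fin 6) : FreeGroup (Fin 6) := FreeGroup.of i

/-- `r_6 = (x_1x_2⁻¹x_6x_2⁻¹x_1)⁻¹ · x_4x_3⁻¹x_1x_2⁻¹x_3x_4⁻¹ · x_6 ·
x_4⁻¹x_3x_2⁻¹x_1x_3⁻¹x_4 ∈ F_6`, one of the relators of the associated core group of
the 2-parallel of the Borromean rings. -/
def rBor6 : FreeGroup (Fin 6) :=
  (xF6 0 * (xF6 1)⁻¹ * xF6 5 * (xF6 1)⁻¹ * xF6 0)⁻¹ *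
  (xF6 3 * (xF6 2)⁻¹ * xF6 0 * (xF6 1)⁻¹ * xF6 2 * (xF6 3)⁻¹ *
   xF6 5 *
   (xF6 3)⁻¹ * xF6 2 * (xF6 1)⁻¹ * xF6 0 * (xF6 2)⁻¹ * xF6 3)

set_option maxRecDepth 100000

/-! ### The group `U6` of unitriangular matrices, hand-rolled -/

@[ext]
structure U6 where
  a : ZMod 2
  b : ZMod 2
  c : ZMod 2
  d : ZMod 2
  e : ZMod 2
  f : ZMod 2
  deriving DecidableEq

instance : Fintype U6 :=
  Fintype.ofEquiv (ZMod 2 × ZMod 2 × ZMod 2 × ZMod 2 × ZMod 2 × ZMod 2)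
    { toFun := fun x => ⟨x.1, x.2.1, x.2.2.1, x.2.2.2.1, x.2.2.2.2.1, x.2.2.2.2.2⟩
      invFun := fun u => (u.a, u.b, u.c, u.d, u.e, u.f)
      left_inv := fun _ => rfl
      right_inv := fun _ => rfl }

def U6.mul (u v : U6) : U6 :=
  ⟨u.a + v.a, u.b + v.b, u.c + v.c, u.d + v.d + u.a * v.b,
   u.e + v.e + u.b * v.c, u.f + v.f + u.a * v.e + u.d * v.c⟩

def U6.inv (u : U6) : U6 :=
  ⟨-u.a, -u.b, -u.c, -u.d + u.a * u.b, -u.e + u.b * u.c,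
   -u.f + u.a * u.e + u.d * u.c - u.a * u.b * u.c⟩

instance : Group U6 where
  mul := U6.mul
  one := ⟨0,0,0,0,0,0⟩
  inv := U6.inv
  mul_assoc u v w := by
    show U6.mul (U6.mul u v) w = U6.mul u (U6.mul v w)
    refine U6.ext ?_ ?_ ?_ ?_ ?_ ?_ <;> (dsimp only [U6.mul]; ring)
  one_mul u := by
    show U6.mul ⟨0,0,0,0,0,0⟩ u = u
    refine U6.ext ?_ ?_ ?_ ?_ ?_ ?_ <;> (dsimp only [U6.mul]; ring)
  mul_one u := by
    show U6.mul u ⟨0,0,0,0,0,0⟩ = u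
    refine U6.ext ?_ ?_ ?_ ?_ ?_ ?_ <;> (dsimp only [U6.mul]; ring)
  inv_mul_cancel u := by
    show U6.mul (U6.inv u) u = ⟨0,0,0,0,0,0⟩
    refine U6.ext ?_ ?_ ?_ ?_ ?_ ?_ <;> (dsimp only [U6.mul, U6.inv]; ring)

lemma U6.pow_four (u : U6) : u ^ 4 = 1 := by revert u; decide

def U6.gen : Fin 6 → U6 :=
  fun i => if i = 1 then ⟨1,0,0,0,0,0⟩ else if i = 3 then ⟨0,1,0,0,0,0⟩
    else if i = 5 then ⟨0,0,1,0,0,0⟩ else 1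

lemma k2mul : ∀ x y : U6, (x.a = 0 ∧ x.b = 0 ∧ x.c = 0) →
    (y.a = 0 ∧ y.b = 0 ∧ y.c = 0) →
    ((x*y).a = 0 ∧ (x*y).b = 0 ∧ (x*y).c = 0) := by decide

lemma k2inv : ∀ x : U6, (x.a = 0 ∧ x.b = 0 ∧ x.c = 0) →
    (x⁻¹.a = 0 ∧ x⁻¹.b = 0 ∧ x⁻¹.c = 0) := by decide

def K2 : Subgroup U6 where
  carrier := {u | u.a = 0 ∧ u.b = 0 ∧ u.c = 0}
  mul_mem' := fun hx hy => k2mul _ _ hx hy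
  one_mem' := ⟨rfl, rfl, rfl⟩
  inv_mem' := fun hx => k2inv _ hx

lemma k3mul : ∀ x y : U6, (x.a = 0 ∧ x.b = 0 ∧ x.c = 0 ∧ x.d = 0 ∧ x.e = 0) →
    (y.a = 0 ∧ y.b = 0 ∧ y.c = 0 ∧ y.d = 0 ∧ y.e = 0) →
    ((x*y).a = 0 ∧ (x*y).b = 0 ∧ (x*y).c = 0 ∧ (x*y).d = 0 ∧ (x*y).e = 0) := by decide

lemma k3inv : ∀ x : U6, (x.a = 0 ∧ x.b = 0 ∧ x.c = 0 ∧ x.d = 0 ∧ x.e = 0) →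
    (x⁻¹.a = 0 ∧ x⁻¹.b = 0 ∧ x⁻¹.c = 0 ∧ x⁻¹.d = 0 ∧ x⁻¹.e = 0) := by decide

def K3 : Subgroup U6 where
  carrier := {u | u.a = 0 ∧ u.b = 0 ∧ u.c = 0 ∧ u.d = 0 ∧ u.e = 0}
  mul_mem' := fun hx hy => k3mul _ _ hx hy
  one_mem' := ⟨rfl, rfl, rfl, rfl, rfl⟩
  inv_mem' := fun hx => k3inv _ hx

open scoped commutatorElement

lemma key2 : ∀ g h : U6, (⁅g,h⁆.a = 0 ∧ ⁅g,h⁆.b = 0 ∧ ⁅g,h⁆.c = 0) := by decide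

lemma key3 : ∀ g h : U6, (g.a = 0 ∧ g.b = 0 ∧ g.c = 0) →
    (⁅g,h⁆.a = 0 ∧ ⁅g,h⁆.b = 0 ∧ ⁅g,h⁆.c = 0 ∧ ⁅g,h⁆.d = 0 ∧ ⁅g,h⁆.e = 0) := by decide

lemma key4 : ∀ g h : U6, (g.a = 0 ∧ g.b = 0 ∧ g.c = 0 ∧ g.d = 0 ∧ g.e = 0) →
    ⁅g,h⁆ = 1 := by decide

lemma lcs1_le : (⊤ : Subgroup U6).lowerCentralSeries 1 ≤ K2 := by
  show ⁅(⊤ : Subgroup U6).lowerCentralSeries 0, (⊤ : Subgroup U6)⁆ ≤ K2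
  rw [Subgroup.commutator_le]
  exact fun g _ h _ => key2 g h

lemma lcs2_le : (⊤ : Subgroup U6).lowerCentralSeries 2 ≤ K3 := by
  show ⁅(⊤ : Subgroup U6).lowerCentralSeries 1, (⊤ : Subgroup U6)⁆ ≤ K3
  refine le_trans (Subgroup.commutator_mono lcs1_le le_rfl) ?_
  rw [Subgroup.commutator_le]
  exact fun g hg h _ => key3 g h hg

lemma lcs3_le : (⊤ : Subgroup U6).lowerCentralSeries 3 ≤ ⊥ := by
  show ⁅(⊤ : Subgroup U6).lowerCentralSeries 2, (⊤ : Subgroup U6)⁆ ≤ ⊥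
  refine le_trans (Subgroup.commutator_mono lcs2_le le_rfl) ?_
  rw [Subgroup.commutator_le]
  exact fun g hg h _ => Subgroup.mem_bot.mpr (key4 g h hg)

lemma lcs4_eq_bot : (⊤ : Subgroup U6).lowerCentralSeries 4 = ⊥ :=
  le_antisymm (le_trans (Subgroup.lowerCentralSeries_antitone ⊤ (by norm_num)) lcs3_le) bot_le

/-! ### Matrix representation for coefficient extraction -/

def MM (i : Fin 6) : Matrix (Fin 4) (Fin 4) (ZMod 2) :=
  Matrix.of fun a b => if (b : ℕ) = (a : ℕ) + 1 ∧ (i : ℕ) = 2 * (a : ℕ) + 1 then 1 else 0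

lemma fv0 : ((0 : Fin 4) : ℕ) = 0 := rfl
lemma fv1 : ((1 : Fin 4) : ℕ) = 1 := rfl
lemma fv2 : ((2 : Fin 4) : ℕ) = 2 := rfl
lemma fv3 : ((3 : Fin 4) : ℕ) = 3 := rfl

def Fc : List (Fin 6) → ℕ → ℕ → ZMod 2
  | [], a, b => if a = b then 1 else 0
  | i :: w, a, b => if (i : ℕ) = 2 * a + 1 then Fc w (a + 1) b else 0

lemma entry_lemma (w : List (Fin 6)) :
    ∀ a b : Fin 4, (w.map MM).prod a b = Fc w (a : ℕ) (b : ℕ) := by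
  induction w with
  | nil =>
    intro a b
    simp [Fc, Matrix.one_apply, Fin.val_eq_val]
  | cons i w ih =>
    intro a b
    rw [List.map_cons, List.prod_cons, Matrix.mul_apply, Fin.sum_univ_four]
    simp only [ih]
    have hi := i.isLt
    fin_cases a <;>
      simp only [MM, Matrix.of_apply, Fc, fv0, fv1, fv2, fv3] <;>
      norm_num <;>
      (try split_ifs) <;>
      first
        | rfl
        | simp
        | omega
        | simp_all

lemma Fc_zero (w : List (Fin 6)) : ∀ a b : ℕ, b < 4 → 4 ≤ a + w.length → Fc w a b = 0 := by
  induction w with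
  | nil =>
    intro a b hb ha
    simp only [List.length_nil, Nat.add_zero] at ha
    simp only [Fc]
    rw [if_neg]; omega
  | cons i w ih =>
    intro a b hb ha
    simp only [Fc]
    split_ifs with h
    · exact ih (a + 1) b hb (by simp at ha ⊢; omega)
    · rfl

lemma Fc33 (w : List (Fin 6)) : Fc w 3 3 = if w = [] then 1 else 0 := by
  cases w with
  | nil => simp [Fc]
  | cons i w =>
    have hi := i.isLt
    simp only [Fc]
    rw [if_neg (by omega)]
    simp

lemma Fc23 (w : List (Fin 6)) : Fc w 2 3 = if w = [5] then 1 else 0 := by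
  cases w with
  | nil => simp [Fc]
  | cons i w =>
    simp only [Fc]
    norm_num [Fc33]
    have : ((i : ℕ) = 5) ↔ i = 5 := by
      constructor
      · intro h; exact Fin.ext h
      · intro h; subst h; rfl
    split_ifs <;> simp_all
lemma Fc13 (w : List (Fin 6)) : Fc w 1 3 = if w = [3, 5] then 1 else 0 := by
  cases w with
  | nil => simp [Fc]
  | cons i w =>
    simp only [Fc]
    norm_num [Fc23]
    have : ((i : ℕ) = 3) ↔ i = 3 := by
      constructor
      · intro h; exact Fin.ext h
      · intro h; subst h; rfl
    split_ifs <;> simp_all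

lemma Fc03 (w : List (Fin 6)) : Fc w 0 3 = if w = [1, 3, 5] then 1 else 0 := by
  cases w with
  | nil => simp [Fc]
  | cons i w =>
    simp only [Fc]
    norm_num [Fc13]
    have : ((i : ℕ) = 1) ↔ i = 1 := by
      constructor
      · intro h; exact Fin.ext h
      · intro h; subst h; rfl
    split_ifs <;> simp_all

noncomputable def fAlg : FreeAlgebra (ZMod 2) (Fin 6) →ₐ[ZMod 2] Matrix (Fin 4) (Fin 4) (ZMod 2) :=
  FreeAlgebra.lift (ZMod 2) MM

lemma fAlg_monomial (w : List (Fin 6)) : fAlg (magnusMonomial 2 6 w) = (w.map MM).prod := by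
  unfold magnusMonomial
  rw [map_list_prod, List.map_map]
  congr 1
  apply List.map_congr_left
  intro i _
  simp [fAlg]

lemma fAlg_rel : ∀ ⦃x y⦄, truncRel 2 6 4 x y → fAlg x = fAlg y := by
  rintro x y ⟨w, hlen, rfl, rfl⟩
  rw [map_zero, fAlg_monomial]
  ext a b
  rw [entry_lemma, Matrix.zero_apply]
  exact Fc_zero w a b b.isLt (by omega)

noncomputable def fhat : TruncAlgebra 2 6 4 →+* Matrix (Fin 4) (Fin 4) (ZMod 2) :=
  RingQuot.lift ⟨fAlg.toRingHom, fAlg_rel⟩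

lemma fhat_mk (x : FreeAlgebra (ZMod 2) (Fin 6)) : fhat (truncMk 2 6 4 x) = fAlg x :=
  RingQuot.lift_mkRingHom_apply _ fAlg_rel x

/-! ### Coefficient extraction via the monoid-algebra basis -/

noncomputable abbrev eMA :=
  FreeAlgebra.equivMonoidAlgebraFreeMonoid (R := ZMod 2) (X := Fin 6)

lemma eMA_ι (i : Fin 6) :
    eMA (FreeAlgebra.ι (ZMod 2) i) = MonoidAlgebra.single (FreeMonoid.of i) 1 := by
  simp [eMA, FreeAlgebra.equivMonoidAlgebraFreeMonoid, MonoidAlgebra.of_apply]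

lemma eMA_symm_single (w : List (Fin 6)) :
    eMA.symm (MonoidAlgebra.single (FreeMonoid.ofList w) 1) = magnusMonomial 2 6 w := by
  induction w with
  | nil =>
    show eMA.symm (MonoidAlgebra.single 1 1) = _
    rw [← MonoidAlgebra.one_def, map_one]
    simp [magnusMonomial]
  | cons i w ih =>
    rw [FreeMonoid.ofList_cons]
    have : (MonoidAlgebra.single (FreeMonoid.of i * FreeMonoid.ofList w) (1 : ZMod 2)) =
        MonoidAlgebra.single (FreeMonoid.of i) 1 * MonoidAlgebra.single (FreeMonoid.ofList w) 1 := by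
      rw [MonoidAlgebra.single_mul_single, one_mul]
    rw [this, map_mul, ih]
    have hι : eMA.symm (MonoidAlgebra.single (FreeMonoid.of i) 1) = FreeAlgebra.ι (ZMod 2) i := by
      rw [AlgEquiv.symm_apply_eq, eMA_ι]
    rw [hι]
    simp [magnusMonomial]

lemma coeff_eq (t : FreeAlgebra (ZMod 2) (Fin 6)) :
    magnusCoeff 2 6 [1, 3, 5] t = fAlg t 0 3 := by
  obtain ⟨s, rfl⟩ : ∃ s, eMA.symm s = t := ⟨eMA t, eMA.symm_apply_apply t⟩
  unfold magnusCoeff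
  rw [AlgEquiv.apply_symm_apply]
  induction s using MonoidAlgebra.induction_linear with
  | zero => simp
  | add f g hf hg => simp only [map_add, MonoidAlgebra.coeff_add, Finsupp.add_apply, Matrix.add_apply, hf, hg]
  | single m r =>
    show (MonoidAlgebra.single m r).coeff (FreeMonoid.ofList [1, 3, 5]) =
      fAlg (eMA.symm (MonoidAlgebra.single m r)) 0 3
    have hms : m = FreeMonoid.ofList (FreeMonoid.toList m) := rfl
    have hL : (MonoidAlgebra.single m r).coeff (FreeMonoid.ofList [1, 3, 5]) =
        if FreeMonoid.toList m = [1, 3, 5] then r else 0 := by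
      by_cases hcase : FreeMonoid.toList m = [1, 3, 5]
      · rw [if_pos hcase]
        have hq : FreeMonoid.ofList [1, 3, 5] = m := by
          rw [← hcase, FreeMonoid.ofList_toList]
        rw [hq]
        exact Finsupp.single_eq_same
      · rw [if_neg hcase]
        exact Finsupp.single_eq_of_ne
          (fun hq => hcase (congrArg FreeMonoid.toList hq.symm))
    have hm : MonoidAlgebra.single m r = r • MonoidAlgebra.single m (1 : ZMod 2) := by
      rw [MonoidAlgebra.smul_single', mul_one]
    have hR : fAlg (eMA.symm (MonoidAlgebra.single m r)) 0 3 =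
        r • Fc (FreeMonoid.toList m) 0 3 := by
      rw [hm, map_smul, map_smul, hms, eMA_symm_single, fAlg_monomial,
        Matrix.smul_apply, entry_lemma, fv0, fv3]
      rfl
    rw [hL, hR, Fc03]
    split_ifs <;> simp

/-! ### The units and final computation -/

lemma MM_sq (i : Fin 6) : (1 + MM i) * (1 + MM i) = 1 := by
  revert i; decide

noncomputable def vU (i : Fin 6) : (Matrix (Fin 4) (Fin 4) (ZMod 2))ˣ :=
  ⟨1 + MM i, 1 + MM i, MM_sq i, MM_sq i⟩

lemma vU_inv (i : Fin 6) : (vU i)⁻¹ = vU i :=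
  inv_eq_of_mul_eq_one_right (Units.ext (MM_sq i))

lemma fhat_magnus (g : FreeGroup (Fin 6)) :
    fhat ↑(magnus 2 6 4 g) = ↑(FreeGroup.lift vU g) := by
  have key : (Units.map fhat.toMonoidHom).comp (magnus 2 6 4) = FreeGroup.lift vU := by
    apply FreeGroup.ext_hom
    intro i
    apply Units.ext
    rw [MonoidHom.comp_apply, FreeGroup.lift_apply_of, Units.coe_map]
    show fhat ↑(magnus 2 6 4 (FreeGroup.of i)) = ↑(vU i)
    rw [magnus, FreeGroup.lift_apply_of, IsUnit.unit_spec, map_add, map_one, fhat_mk]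
    show 1 + fAlg (FreeAlgebra.ι (ZMod 2) i) = 1 + MM i
    simp [fAlg]
  calc fhat ↑(magnus 2 6 4 g) = ↑((Units.map fhat.toMonoidHom).comp (magnus 2 6 4) g) := by
        simp [MonoidHom.comp_apply, Units.coe_map]
    _ = ↑(FreeGroup.lift vU g) := by rw [key]

lemma vU_val (i : Fin 6) : (↑(vU i) : Matrix (Fin 4) (Fin 4) (ZMod 2)) = 1 + MM i := rfl

set_option maxHeartbeats 1000000 in
lemma final_entry : (↑(FreeGroup.lift vU rBor6) : Matrix (Fin 4) (Fin 4) (ZMod 2)) 0 3 = 1 := by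
  simp only [rBor6, xF6, map_mul, map_inv, FreeGroup.lift_apply_of, vU_inv, Units.val_mul, vU_val]
  decide

/-! ### Part 1: the homomorphism to `U6` -/

def G6 : FreeGroup (Fin 6) →* U6 := FreeGroup.lift U6.gen

lemma G6_rBor6 : G6 rBor6 = ⟨0, 0, 0, 0, 0, 1⟩ := by
  simp only [G6, rBor6, xF6, map_mul, map_inv, FreeGroup.lift_apply_of]
  decide

lemma part1 : rBor6 ∉ WbarGamma 6 4 5 := by
  intro h
  have hker : WbarGamma 6 4 5 ≤ G6.ker := by
    refine sup_le ?_ ?_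
    · refine Subgroup.normalClosure_le_normal ?_
      rintro x ⟨w, rfl⟩
      show G6 (w ^ 4) = 1
      rw [map_pow]
      exact U6.pow_four _
    · intro x hx
      have hx' : G6 x ∈ Subgroup.map G6 ((⊤ : Subgroup (FreeGroup (Fin 6))).lowerCentralSeries 4) :=
        ⟨x, hx, rfl⟩
      have hb := Subgroup.lowerCentralSeries.map G6 4 hx'
      rw [lcs4_eq_bot] at hb
      exact Subgroup.mem_bot.mp hb
  have h1 : G6 rBor6 = 1 := hker h
  rw [G6_rBor6] at h1
  exact absurd h1 (by decide)

/-- The element `r_6 ∈ F_6` does not belong to `W̄_4 · γ_5 F_6`;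
indeed, in `A_4` over `ℤ/2ℤ` on `X_1, …, X_6`, the degree-3 component of `E^2(r_6)` has
coefficient `1` on `X_2X_4X_6`. -/
theorem rBor6_not_mem_WbarGamma_four :
    rBor6 ∉ WbarGamma 6 4 5 ∧
    ∀ t : FreeAlgebra (ZMod 2) (Fin 6),
      truncMk 2 6 4 t = ↑(magnus 2 6 4 rBor6) →
        magnusCoeff 2 6 [1, 3, 5] t = 1 := by
  refine ⟨part1, ?_⟩
  intro t ht
  rw [coeff_eq t, ← fhat_mk t, ht, fhat_magnus, final_entry]
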